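/- Let R be a finite commutative local ring, G = GL_n(R), U the upper unitriangular subgroup, V the lower unitriangular subgroup, and w a permutation matrix. Then the multiplication map (U ∩ w⁻¹Uw) × (U ∩ w⁻¹Vw) → U is a bijection. -/

import Mathlib

open Matrix MonoidAlgebra

namespace PS

variable {n : ℕ} {R : Type*} [CommRing R]

/-- `g` is upper unitriangular. -/
def IsU (g : GL (Fin n) R) : Prop :=
  (∀ i : Fin n, (g : Matrix (Fin n) (Fin n) R) i i = 1) ∧
    ∀ i j : Fin n, j < i → (g : Matrix (Fin n) (Fin n) R) i j = 0

/-- `g` is lower unitriangular. -/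
def IsV (g : GL (Fin n) R) : Prop :=
  (∀ i : Fin n, (g : Matrix (Fin n) (Fin n) R) i i = 1) ∧
    ∀ i j : Fin n, i < j → (g : Matrix (Fin n) (Fin n) R) i j = 0

/-- `g` is diagonal. -/
def IsL (g : GL (Fin n) R) : Prop :=
  ∀ i j : Fin n, i ≠ j → (g : Matrix (Fin n) (Fin n) R) i j = 0

/-- `g` is a permutation matrix. -/
def IsW (g : GL (Fin n) R) : Prop :=
  ∃ σ : Equiv.Perm (Fin n), (g : Matrix (Fin n) (Fin n) R) = σ.permMatrix R

def Uset (n : ℕ) (R : Type*) [CommRing R] : Set (GL (Fin n) R) := {g | IsU g}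
def Vset (n : ℕ) (R : Type*) [CommRing R] : Set (GL (Fin n) R) := {g | IsV g}
def Lset (n : ℕ) (R : Type*) [CommRing R] : Set (GL (Fin n) R) := {g | IsL g}
def Wset (n : ℕ) (R : Type*) [CommRing R] : Set (GL (Fin n) R) := {g | IsW g}

/-- the diagonal element of `GL n R` with unit entries `d`. -/
def diagGL (d : Fin n → Rˣ) : GL (Fin n) R :=
  ⟨Matrix.diagonal fun i => (d i : R), Matrix.diagonal fun i => ((d i)⁻¹ : Rˣ),
   by rw [Matrix.diagonal_mul_diagonal]; convert Matrix.diagonal_one using 2; simp,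
   by rw [Matrix.diagonal_mul_diagonal]; convert Matrix.diagonal_one using 2; simp⟩

/-- the permutation matrix of `σ`, as an element of `GL n R`. -/
def permGL (σ : Equiv.Perm (Fin n)) : GL (Fin n) R :=
  ⟨σ.permMatrix R, (σ⁻¹).permMatrix R,
   by
    simp only [Equiv.Perm.permMatrix, ← PEquiv.toMatrix_trans, ← Equiv.toPEquiv_trans]
    simp [Equiv.Perm.inv_def, Equiv.self_trans_symm, Equiv.symm_trans_self, Equiv.toPEquiv_refl, PEquiv.toMatrix_refl],
   by
    simp only [Equiv.Perm.permMatrix, ← PEquiv.toMatrix_trans, ← Equiv.toPEquiv_trans]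
    simp [Equiv.Perm.inv_def, Equiv.self_trans_symm, Equiv.symm_trans_self, Equiv.toPEquiv_refl, PEquiv.toMatrix_refl]⟩

/-- `H^w = w⁻¹ H w`, as a subset of the group. -/
def conjSet {G : Type*} [Group G] (S : Set G) (w : G) : Set G := {g | w * g * w⁻¹ ∈ S}

/-- the set of adjacent transpositions (standard Coxeter generators) in `S_n`. -/
def adjT (n : ℕ) : Set (Equiv.Perm (Fin n)) :=
  {σ | ∃ i j : Fin n, (i : ℕ) + 1 = (j : ℕ) ∧ σ = Equiv.swap i j}

/-- the Coxeter word length of a permutation, with respect to adjacent transpositions. -/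
noncomputable def permLength {n : ℕ} (σ : Equiv.Perm (Fin n)) : ℕ :=
  sInf {k | ∃ l : List (Equiv.Perm (Fin n)),
    l.length = k ∧ (∀ τ ∈ l, τ ∈ adjT n) ∧ l.prod = σ}

open scoped Classical in
/-- the averaging element `e_S = |S|⁻¹ ∑_{h ∈ S} h` in the complex group algebra. -/
noncomputable def eAvg {G : Type*} [Group G] [Fintype G] (S : Set G) : MonoidAlgebra ℂ G :=
  (S.toFinset.card : ℂ)⁻¹ • ∑ h ∈ S.toFinset, MonoidAlgebra.of ℂ G h

/-- the reduction-mod-`m` homomorphism `GL_n(R) → GL_n(R/m)` for a local ring `R`. -/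
noncomputable def red (n : ℕ) (R : Type*) [CommRing R] [IsLocalRing R] :
    GL (Fin n) R →* GL (Fin n) (IsLocalRing.ResidueField R) :=
  Matrix.GeneralLinearGroup.map (IsLocalRing.residue R)

/-- the congruence kernel `G_0 = ker (GL_n(R) → GL_n(R/m))`. -/
noncomputable def G0 (n : ℕ) (R : Type*) [CommRing R] [IsLocalRing R] : Set (GL (Fin n) R) :=
  {g | red n R g = 1}

variable [Fintype R] [DecidableEq R]

/-- the primitive idempotent `e_χ = |L|⁻¹ ∑_{l ∈ L} χ(l)⁻¹ l` of `C[L] ⊆ C[G]` attached to the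
character `χ` of `L ≅ (Rˣ)^n`. -/
noncomputable def eChi (χ : (Fin n → Rˣ) →* ℂˣ) : MonoidAlgebra ℂ (GL (Fin n) R) :=
  (Fintype.card (Fin n → Rˣ) : ℂ)⁻¹ •
    ∑ d : Fin n → Rˣ, (((χ d)⁻¹ : ℂˣ) : ℂ) • MonoidAlgebra.of ℂ (GL (Fin n) R) (diagGL d)

/-- the representation `i(χ) ≅ C[G] e_U e_V e_χ`, as a `ℂ`-subspace of `C[G]`
(with `G` acting by left multiplication). -/
noncomputable def Vrep (n : ℕ) (R : Type*) [CommRing R] [Fintype R] [DecidableEq R]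
    (χ : (Fin n → Rˣ) →* ℂˣ) : Submodule ℂ (MonoidAlgebra ℂ (GL (Fin n) R)) :=
  LinearMap.range (LinearMap.mulRight ℂ (eAvg (Uset n R) * eAvg (Vset n R) * eChi χ))

/-- the space `Hom_G(i(χ), i(σ))` of `G`-equivariant linear maps. -/
noncomputable def HomG (n : ℕ) (R : Type*) [CommRing R] [Fintype R] [DecidableEq R]
    (χ σ : (Fin n → Rˣ) →* ℂˣ) :
    Submodule ℂ (↥(Vrep n R χ) →ₗ[ℂ] ↥(Vrep n R σ)) where
  carrier := {f | ∀ (g : GL (Fin n) R) (x y : Vrep n R χ),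
    (x : MonoidAlgebra ℂ (GL (Fin n) R)) = MonoidAlgebra.of ℂ (GL (Fin n) R) g * (y : MonoidAlgebra ℂ (GL (Fin n) R)) →
    ((f x : Vrep n R σ) : MonoidAlgebra ℂ (GL (Fin n) R)) = MonoidAlgebra.of ℂ (GL (Fin n) R) g * ((f y : Vrep n R σ) : MonoidAlgebra ℂ (GL (Fin n) R))}
  add_mem' := by
    intro f g hf hg k x y h
    simp only [LinearMap.add_apply, Submodule.coe_add, hf k x y h, hg k x y h, mul_add]
  zero_mem' := by intro k x y h; simp
  smul_mem' := by
    intro c f hf k x y h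
    simp only [LinearMap.smul_apply, Submodule.coe_smul, hf k x y h, Algebra.mul_smul_comm]

end PS

namespace PSA
open PS

variable {n : ℕ} {R : Type*} [CommRing R]

lemma isU_one : IsU (1 : GL (Fin n) R) := by
  constructor
  · intro i; simp [Units.val_one]
  · intro i j hij; simp [Units.val_one, Matrix.one_apply_ne (ne_of_gt hij)]

lemma isV_one : IsV (1 : GL (Fin n) R) := by
  constructor
  · intro i; simp [Units.val_one]
  · intro i j hij; simp [Units.val_one, Matrix.one_apply_ne (ne_of_lt hij)]

lemma isU_mul {a b : GL (Fin n) R} (ha : IsU a) (hb : IsU b) : IsU (a * b) := by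
  obtain ⟨had, hau⟩ := ha
  obtain ⟨hbd, hbu⟩ := hb
  constructor
  · intro i
    show ((a : Matrix (Fin n) (Fin n) R) * b) i i = 1
    rw [Matrix.mul_apply, Finset.sum_eq_single i]
    · rw [had, hbd, one_mul]
    · intro k _ hk
      rcases lt_or_gt_of_ne hk with h | h
      · rw [hau i k h, zero_mul]
      · rw [hbu k i h, mul_zero]
    · intro h; exact absurd (Finset.mem_univ i) h
  · intro i j hij
    show ((a : Matrix (Fin n) (Fin n) R) * b) i j = 0
    rw [Matrix.mul_apply]
    apply Finset.sum_eq_zero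
    intro k _
    by_cases hk : k < i
    · rw [hau i k hk, zero_mul]
    · have : j < k := lt_of_lt_of_le hij (not_lt.mp hk)
      rw [hbu k j this, mul_zero]

lemma isV_mul {a b : GL (Fin n) R} (ha : IsV a) (hb : IsV b) : IsV (a * b) := by
  obtain ⟨had, hau⟩ := ha
  obtain ⟨hbd, hbu⟩ := hb
  constructor
  · intro i
    show ((a : Matrix (Fin n) (Fin n) R) * b) i i = 1
    rw [Matrix.mul_apply, Finset.sum_eq_single i]
    · rw [had, hbd, one_mul]
    · intro k _ hk
      rcases lt_or_gt_of_ne hk with h | h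
      · rw [hbu k i h, mul_zero]
      · rw [hau i k h, zero_mul]
    · intro h; exact absurd (Finset.mem_univ i) h
  · intro i j hij
    show ((a : Matrix (Fin n) (Fin n) R) * b) i j = 0
    rw [Matrix.mul_apply]
    apply Finset.sum_eq_zero
    intro k _
    by_cases hk : i < k
    · rw [hau i k hk, zero_mul]
    · have : k < j := lt_of_le_of_lt (not_lt.mp hk) hij
      rw [hbu k j this, mul_zero]

lemma eq_one_of_isU_isV {g : GL (Fin n) R} (hU : IsU g) (hV : IsV g) : g = 1 := by
  ext i j
  rcases lt_trichotomy i j with h | h | h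
  · rw [hV.2 i j h, Units.val_one, Matrix.one_apply_ne (ne_of_lt h)]
  · subst h; rw [hU.1 i, Units.val_one, Matrix.one_apply_eq]
  · rw [hU.2 i j h, Units.val_one, Matrix.one_apply_ne (ne_of_gt h)]

/-- In a finite group, a multiplicatively closed set containing 1 is closed under inverses. -/
lemma inv_mem_of_finite {G : Type*} [Group G] [Finite G] {S : Set G}
    (hmul : ∀ a ∈ S, ∀ b ∈ S, a * b ∈ S) (h1 : (1 : G) ∈ S) {a : G} (ha : a ∈ S) :
    a⁻¹ ∈ S := by
  have hpow : ∀ k : ℕ, a ^ k ∈ S := by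
    intro k
    induction k with
    | zero => simpa using h1
    | succ m ih => rw [pow_succ]; exact hmul _ ih _ ha
  have h : a⁻¹ = a ^ (orderOf a - 1) := by
    have hpos : 0 < orderOf a := orderOf_pos a
    have : a ^ (orderOf a - 1) * a = 1 := by
      rw [← pow_succ, Nat.sub_add_cancel hpos, pow_orderOf_eq_one]
    exact (eq_inv_of_mul_eq_one_left this).symm
  rw [h]; exact hpow _

lemma uset_mul : ∀ a ∈ Uset n R, ∀ b ∈ Uset n R, a * b ∈ Uset n R :=
  fun _ ha _ hb => isU_mul ha hb

lemma vset_mul : ∀ a ∈ Vset n R, ∀ b ∈ Vset n R, a * b ∈ Vset n R :=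
  fun _ ha _ hb => isV_mul ha hb

lemma conjSet_mul {G : Type*} [Group G] {S : Set G} (w : G)
    (hmul : ∀ a ∈ S, ∀ b ∈ S, a * b ∈ S) :
    ∀ a ∈ conjSet S w, ∀ b ∈ conjSet S w, a * b ∈ conjSet S w := by
  intro a ha b hb
  have := hmul _ ha _ hb
  simpa [conjSet, mul_assoc] using this

lemma one_mem_conjSet {G : Type*} [Group G] {S : Set G} (w : G) (h1 : (1 : G) ∈ S) :
    (1 : G) ∈ conjSet S w := by simpa [conjSet] using h1

lemma coe_conj {w : GL (Fin n) R} (σ : Equiv.Perm (Fin n))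
    (hw : (w : Matrix (Fin n) (Fin n) R) = σ.permMatrix R) (g : GL (Fin n) R) :
    ((w * g * w⁻¹ : GL (Fin n) R) : Matrix (Fin n) (Fin n) R)
      = Matrix.submatrix (g : Matrix (Fin n) (Fin n) R) σ σ := by
  have hperm : w = permGL σ := Units.ext hw
  have hwinv : ((w⁻¹ : GL (Fin n) R) : Matrix (Fin n) (Fin n) R) = (σ⁻¹).permMatrix R := by
    rw [hperm]; rfl
  have : ((w * g * w⁻¹ : GL (Fin n) R) : Matrix (Fin n) (Fin n) R)
      = (σ.permMatrix R) * (g : Matrix (Fin n) (Fin n) R) * ((σ⁻¹).permMatrix R) := by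
    rw [Units.val_mul, Units.val_mul, hw, hwinv]
  rw [this]
  rw [Equiv.Perm.permMatrix, Equiv.Perm.permMatrix, PEquiv.toMatrix_toPEquiv_mul,
    PEquiv.mul_toMatrix_toPEquiv]
  ext i j
  simp [Equiv.Perm.inv_def]

/-- support-constrained unitriangular sets -/
def SP (n : ℕ) (R : Type*) [CommRing R] (P : Set (Fin n × Fin n)) : Set (GL (Fin n) R) :=
  {g | (∀ i, (g : Matrix (Fin n) (Fin n) R) i i = 1) ∧
    ∀ i j, i ≠ j → (i, j) ∉ P → (g : Matrix (Fin n) (Fin n) R) i j = 0}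

def Δset (n : ℕ) : Set (Fin n × Fin n) := {p | p.1 < p.2}

def Aset (σ : Equiv.Perm (Fin n)) : Set (Fin n × Fin n) :=
  {p | p.1 < p.2 ∧ σ⁻¹ p.1 < σ⁻¹ p.2}

def Bset (σ : Equiv.Perm (Fin n)) : Set (Fin n × Fin n) :=
  {p | p.1 < p.2 ∧ σ⁻¹ p.2 < σ⁻¹ p.1}

lemma uset_eq_SP : Uset n R = SP n R (Δset n) := by
  ext g
  constructor
  · rintro ⟨hd, hl⟩
    refine ⟨hd, fun i j hne hP => ?_⟩
    have : ¬ i < j := fun h => hP h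
    exact hl i j (lt_of_le_of_ne (not_lt.mp this) (Ne.symm hne))
  · rintro ⟨hd, hl⟩
    exact ⟨hd, fun i j hij => hl i j (ne_of_gt hij) (fun h => absurd h (not_lt.mpr hij.le))⟩

lemma usetConjU_eq_SP {w : GL (Fin n) R} (σ : Equiv.Perm (Fin n))
    (hw : (w : Matrix (Fin n) (Fin n) R) = σ.permMatrix R) :
    Uset n R ∩ conjSet (Uset n R) w = SP n R (Aset σ) := by
  ext g
  constructor
  · rintro ⟨⟨hd, hl⟩, hc⟩
    refine ⟨hd, fun i j hne hP => ?_⟩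
    rcases lt_trichotomy i j with h | h | h
    · have h2 : ¬ σ⁻¹ i < σ⁻¹ j := fun hh => hP ⟨h, hh⟩
      have h3 : σ⁻¹ j < σ⁻¹ i :=
        lt_of_le_of_ne (not_lt.mp h2) (fun hh => hne (by simpa using congrArg σ hh.symm))
      have := hc.2 (σ⁻¹ i) (σ⁻¹ j) h3
      rw [coe_conj σ hw] at this
      simpa using this
    · exact absurd h hne
    · exact hl i j h
  · rintro ⟨hd, hl⟩
    have hAsub : ∀ p ∈ Aset σ, p.1 < p.2 := fun p hp => hp.1
    have hgU : g ∈ Uset n R := by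
      refine ⟨hd, fun i j hij => hl i j (ne_of_gt hij) (fun h => absurd h.1 (not_lt.mpr hij.le))⟩
    refine ⟨hgU, ?_⟩
    show IsU (w * g * w⁻¹)
    constructor
    · intro i; rw [coe_conj σ hw]; simpa using hd (σ i)
    · intro i j hij
      rw [coe_conj σ hw]
      simp only [Matrix.submatrix_apply]
      refine hl (σ i) (σ j) (fun h => absurd (σ.injective h) (ne_of_gt hij)) ?_
      rintro ⟨-, h2⟩
      simp only [Equiv.Perm.inv_def, Equiv.symm_apply_apply] at h2
      exact absurd h2 (not_lt.mpr hij.le)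

lemma usetConjV_eq_SP {w : GL (Fin n) R} (σ : Equiv.Perm (Fin n))
    (hw : (w : Matrix (Fin n) (Fin n) R) = σ.permMatrix R) :
    Uset n R ∩ conjSet (Vset n R) w = SP n R (Bset σ) := by
  ext g
  constructor
  · rintro ⟨⟨hd, hl⟩, hc⟩
    refine ⟨hd, fun i j hne hP => ?_⟩
    rcases lt_trichotomy i j with h | h | h
    · have h2 : ¬ σ⁻¹ j < σ⁻¹ i := fun hh => hP ⟨h, hh⟩
      have h3 : σ⁻¹ i < σ⁻¹ j :=
        lt_of_le_of_ne (not_lt.mp h2) (fun hh => hne (by simpa using congrArg σ hh))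
      have := hc.2 (σ⁻¹ i) (σ⁻¹ j) h3
      rw [coe_conj σ hw] at this
      simpa using this
    · exact absurd h hne
    · exact hl i j h
  · rintro ⟨hd, hl⟩
    have hgU : g ∈ Uset n R := by
      refine ⟨hd, fun i j hij => hl i j (ne_of_gt hij) (fun h => absurd h.1 (not_lt.mpr hij.le))⟩
    refine ⟨hgU, ?_⟩
    show IsV (w * g * w⁻¹)
    constructor
    · intro i; rw [coe_conj σ hw]; simpa using hd (σ i)
    · intro i j hij
      rw [coe_conj σ hw]
      simp only [Matrix.submatrix_apply]
      refine hl (σ i) (σ j) (fun h => absurd (σ.injective h) (ne_of_lt hij)) ?_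
      rintro ⟨-, h2⟩
      simp only [Equiv.Perm.inv_def, Equiv.symm_apply_apply] at h2
      exact absurd h2 (not_lt.mpr hij.le)

open scoped Classical in
/-- the matrix built from prescribed strictly-upper entries -/
noncomputable def mk (P : Set (Fin n × Fin n)) (f : P → R) : Matrix (Fin n) (Fin n) R :=
  fun i j => if hd : i = j then 1 else if h : (i, j) ∈ P then f ⟨(i, j), h⟩ else 0

open scoped Classical in
lemma mk_blockTriangular (P : Set (Fin n × Fin n)) (hP : ∀ p ∈ P, p.1 < p.2) (f : P → R) :
    (mk P f).BlockTriangular id := by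
  intro i j hij
  have hij' : (j : Fin n) < i := hij
  unfold mk
  rw [dif_neg (ne_of_gt hij')]
  rw [dif_neg (fun h => absurd (hP _ h) (not_lt.mpr hij'.le))]

open scoped Classical in
lemma mk_isUnit (P : Set (Fin n × Fin n)) (hP : ∀ p ∈ P, p.1 < p.2) (f : P → R) :
    IsUnit (mk P f) := by
  rw [Matrix.isUnit_iff_isUnit_det, Matrix.det_of_upperTriangular (mk_blockTriangular P hP f)]
  have : ∀ i, mk P f i i = 1 := fun i => by unfold mk; rw [dif_pos rfl]
  simp [this]

open scoped Classical in
/-- parametrization of `SP P` by its free entries -/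
noncomputable def spEquiv (P : Set (Fin n × Fin n)) (hP : ∀ p ∈ P, p.1 < p.2) :
    ↥(SP n R P) ≃ (↥P → R) where
  toFun g p := ((g : GL (Fin n) R) : Matrix (Fin n) (Fin n) R) (p : Fin n × Fin n).1
    (p : Fin n × Fin n).2
  invFun f := ⟨(mk_isUnit P hP f).unit, by
    constructor
    · intro i
      rw [IsUnit.unit_spec]
      unfold mk; rw [dif_pos rfl]
    · intro i j hne hP'
      rw [IsUnit.unit_spec]
      unfold mk; rw [dif_neg hne, dif_neg hP']⟩
  left_inv := by
    rintro ⟨g, hd, hl⟩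
    apply Subtype.ext
    apply Units.ext
    rw [IsUnit.unit_spec]
    ext i j
    unfold mk
    by_cases hij : i = j
    · subst hij; rw [dif_pos rfl, hd]
    · rw [dif_neg hij]
      by_cases hmem : (i, j) ∈ P
      · rw [dif_pos hmem]
      · rw [dif_neg hmem, hl i j hij hmem]
  right_inv := by
    intro f
    funext p
    show mk P f (p : Fin n × Fin n).1 (p : Fin n × Fin n).2 = f p
    obtain ⟨⟨i, j⟩, hp⟩ := p
    have hne : i ≠ j := ne_of_lt (hP _ hp)
    show mk P f i j = _
    unfold mk
    rw [dif_neg hne, dif_pos hp]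

end PSA


open PS in
/-- Proposition 3.2(d): for a permutation matrix `w`, the multiplication map
`(U ∩ U^w) × (U ∩ V^w) → U` is a bijection. -/
theorem mul_U_cap_conj_bij (n : ℕ) (R : Type*) [CommRing R] [IsLocalRing R] [Finite R]
    (w : GL (Fin n) R) (hw : IsW w) :
    (∀ a ∈ Uset n R ∩ conjSet (Uset n R) w, ∀ b ∈ Uset n R ∩ conjSet (Vset n R) w,
        a * b ∈ Uset n R) ∧
    ∀ u ∈ Uset n R, ∃! p : GL (Fin n) R × GL (Fin n) R,
      p.1 ∈ Uset n R ∩ conjSet (Uset n R) w ∧ p.2 ∈ Uset n R ∩ conjSet (Vset n R) w ∧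
        p.1 * p.2 = u := by
  classical
  obtain ⟨σ, hσ⟩ := hw
  have hA := PSA.usetConjU_eq_SP σ hσ
  have hB := PSA.usetConjV_eq_SP σ hσ
  have hD := PSA.uset_eq_SP (n := n) (R := R)
  have hAsub : ∀ p ∈ PSA.Aset σ, p.1 < p.2 := fun p hp => hp.1
  have hBsub : ∀ p ∈ PSA.Bset σ, p.1 < p.2 := fun p hp => hp.1
  have hDsub : ∀ p ∈ PSA.Δset n, p.1 < p.2 := fun p hp => hp
  -- closure of the two intersection sets
  set T1 := Uset n R ∩ conjSet (Uset n R) w with hT1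
  set T2 := Uset n R ∩ conjSet (Vset n R) w with hT2
  have hT1mul : ∀ a ∈ T1, ∀ b ∈ T1, a * b ∈ T1 := by
    intro a ha b hb
    exact ⟨PSA.isU_mul ha.1 hb.1,
      PSA.conjSet_mul w PSA.uset_mul a ha.2 b hb.2⟩
  have hT2mul : ∀ a ∈ T2, ∀ b ∈ T2, a * b ∈ T2 := by
    intro a ha b hb
    exact ⟨PSA.isU_mul ha.1 hb.1,
      PSA.conjSet_mul w PSA.vset_mul a ha.2 b hb.2⟩
  have hT1one : (1 : GL (Fin n) R) ∈ T1 :=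
    ⟨PSA.isU_one, PSA.one_mem_conjSet w PSA.isU_one⟩
  have hT2one : (1 : GL (Fin n) R) ∈ T2 :=
    ⟨PSA.isU_one, PSA.one_mem_conjSet w PSA.isV_one⟩
  have hT1inv : ∀ a ∈ T1, a⁻¹ ∈ T1 := fun a ha =>
    PSA.inv_mem_of_finite hT1mul hT1one ha
  have hT2inv : ∀ a ∈ T2, a⁻¹ ∈ T2 := fun a ha =>
    PSA.inv_mem_of_finite hT2mul hT2one ha
  refine ⟨fun a ha b hb => PSA.isU_mul ha.1 hb.1, ?_⟩
  -- the multiplication map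
  have hmemF : ∀ (a : ↥(PSA.SP n R (PSA.Aset σ))) (b : ↥(PSA.SP n R (PSA.Bset σ))),
      (a : GL (Fin n) R) * b ∈ PSA.SP n R (PSA.Δset n) := by
    intro a b
    have ha' : (a : GL (Fin n) R) ∈ T1 := by rw [hA]; exact a.2
    have hb' : (b : GL (Fin n) R) ∈ T2 := by rw [hB]; exact b.2
    rw [← hD]
    exact PSA.isU_mul ha'.1 hb'.1
  set F : ↥(PSA.SP n R (PSA.Aset σ)) × ↥(PSA.SP n R (PSA.Bset σ)) → ↥(PSA.SP n R (PSA.Δset n)) :=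
    fun p => ⟨(p.1 : GL (Fin n) R) * p.2, hmemF p.1 p.2⟩ with hF
  have hinj : Function.Injective F := by
    rintro ⟨x1, x2⟩ ⟨y1, y2⟩ hxy
    have h : (x1 : GL (Fin n) R) * (x2 : GL (Fin n) R) = (y1 : GL (Fin n) R) * (y2 : GL (Fin n) R) := by
      simpa [hF, Subtype.ext_iff] using hxy
    have hc : (y1 : GL (Fin n) R)⁻¹ * (x1 : GL (Fin n) R) = (y2 : GL (Fin n) R) * (x2 : GL (Fin n) R)⁻¹ := by
      have := congrArg (fun z => ((y1 : GL (Fin n) R))⁻¹ * z * ((x2 : GL (Fin n) R))⁻¹) h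
      simpa [mul_assoc] using this
    have hx1T : (x1 : GL (Fin n) R) ∈ T1 := by rw [hA]; exact x1.2
    have hy1T : (y1 : GL (Fin n) R) ∈ T1 := by rw [hA]; exact y1.2
    have hx2T : (x2 : GL (Fin n) R) ∈ T2 := by rw [hB]; exact x2.2
    have hy2T : (y2 : GL (Fin n) R) ∈ T2 := by rw [hB]; exact y2.2
    have hcT1 : (y1 : GL (Fin n) R)⁻¹ * (x1 : GL (Fin n) R) ∈ T1 := hT1mul _ (hT1inv _ hy1T) _ hx1T
    have hcT2 : (y1 : GL (Fin n) R)⁻¹ * (x1 : GL (Fin n) R) ∈ T2 := by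
      rw [hc]; exact hT2mul _ hy2T _ (hT2inv _ hx2T)
    have hcU : IsU (w * ((y1 : GL (Fin n) R)⁻¹ * (x1 : GL (Fin n) R)) * w⁻¹) := hcT1.2
    have hcV : IsV (w * ((y1 : GL (Fin n) R)⁻¹ * (x1 : GL (Fin n) R)) * w⁻¹) := hcT2.2
    have h1 : w * ((y1 : GL (Fin n) R)⁻¹ * (x1 : GL (Fin n) R)) * w⁻¹ = 1 := PSA.eq_one_of_isU_isV hcU hcV
    have hcone : (y1 : GL (Fin n) R)⁻¹ * (x1 : GL (Fin n) R) = 1 := by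
      have := congrArg (fun z => w⁻¹ * z * w) h1
      simpa [mul_assoc] using this
    have hx1 : (x1 : GL (Fin n) R) = y1 := by
      have := inv_mul_eq_one.mp hcone
      exact this.symm
    have hx2 : (x2 : GL (Fin n) R) = y2 := by
      rw [hcone] at hc
      have := mul_inv_eq_one.mp hc.symm
      exact this.symm
    exact Prod.ext (Subtype.ext hx1) (Subtype.ext hx2)
  -- cardinality
  have : Fintype R := Fintype.ofFinite R
  have hdisj : Disjoint (PSA.Aset σ) (PSA.Bset σ) := by
    rw [Set.disjoint_left]
    rintro p ⟨-, h1⟩ ⟨-, h2⟩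
    exact absurd h2 (lt_asymm h1)
  have hun : PSA.Aset σ ∪ PSA.Bset σ = PSA.Δset n := by
    ext p
    constructor
    · rintro (⟨h, -⟩ | ⟨h, -⟩) <;> exact h
    · intro hp
      rcases lt_trichotomy (σ⁻¹ p.1) (σ⁻¹ p.2) with h | h | h
      · exact Or.inl ⟨hp, h⟩
      · exact absurd (by simpa using congrArg σ h) (ne_of_lt hp)
      · exact Or.inr ⟨hp, h⟩
  have hcardA := Nat.card_congr (PSA.spEquiv (R := R) (PSA.Aset σ) hAsub)
  have hcardB := Nat.card_congr (PSA.spEquiv (R := R) (PSA.Bset σ) hBsub)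
  have hcardD := Nat.card_congr (PSA.spEquiv (R := R) (PSA.Δset n) hDsub)
  have hncard : (PSA.Δset n).ncard = (PSA.Aset σ).ncard + (PSA.Bset σ).ncard := by
    rw [← hun, Set.ncard_union_eq hdisj (Set.toFinite _) (Set.toFinite _)]
  have hcard : Nat.card (↥(PSA.SP n R (PSA.Aset σ)) × ↥(PSA.SP n R (PSA.Bset σ)))
      = Nat.card ↥(PSA.SP n R (PSA.Δset n)) := by
    rw [Nat.card_prod, hcardA, hcardB, hcardD, Nat.card_fun, Nat.card_fun, Nat.card_fun,
      Nat.card_coe_set_eq, Nat.card_coe_set_eq, Nat.card_coe_set_eq, hncard,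
      pow_add]
  have hbij : Function.Bijective F :=
    (Nat.bijective_iff_injective_and_card F).mpr ⟨hinj, hcard⟩
  -- conclude
  intro u hu
  have hu' : u ∈ PSA.SP n R (PSA.Δset n) := hD ▸ hu
  obtain ⟨⟨a, b⟩, hab⟩ := hbij.2 ⟨u, hu'⟩
  have habe : (a : GL (Fin n) R) * b = u := by
    simpa [hF, Subtype.ext_iff] using hab
  refine ⟨((a : GL (Fin n) R), (b : GL (Fin n) R)), ⟨?_, ?_, habe⟩, ?_⟩
  · rw [hA]; exact a.2
  · rw [hB]; exact b.2
  · rintro ⟨q1, q2⟩ ⟨hq1, hq2, hq⟩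
    rw [hA] at hq1
    rw [hB] at hq2
    have := hinj (a₁ := (⟨q1, hq1⟩, ⟨q2, hq2⟩)) (a₂ := (a, b)) (by
      rw [hab]
      exact Subtype.ext hq)
    have h1 := congrArg (fun p : ↥(PSA.SP n R (PSA.Aset σ)) × ↥(PSA.SP n R (PSA.Bset σ)) => p.1.val) this
    have h2 := congrArg (fun p : ↥(PSA.SP n R (PSA.Aset σ)) × ↥(PSA.SP n R (PSA.Bset σ)) => p.2.val) this
    exact Prod.ext h1 h2
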